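/- arXiv:1205.6455 — 4 statements merged into one kernel-verified Lean document; each statement's English description precedes it below -/
import Mathlib

section
/- Let s: ℝ → ℝ be a smooth, positive, π-periodic function with 𝔯(θ) := s''(θ) + s(θ) > 0 for all θ (the support function of a smooth, origin-symmetric, strictly convex closed curve), and let σ(θ) := s(θ)·𝔯(θ)^(1/3) be its affine support function. Then σ' vanishes at no fewer than eight points of one period: there exist eight distinct points θ₁, …, θ₈ ∈ [0, 2π) with σ'(θᵢ) = 0 for i = 1, …, 8. -/
open Real Set Filter

noncomputable section

/-- Radius of curvature of the curve with support function `f`: `𝔯[f] = f'' + f`. -/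
def rad (f : ℝ → ℝ) (θ : ℝ) : ℝ := iteratedDeriv 2 f θ + f θ


lemma zero_in_Ioo {g : ℝ → ℝ} (hg : Continuous g) {u v : ℝ} (huv : u < v)
    (h1 : g u < 0) (h2 : 0 < g v) : ∃ z ∈ Ioo u v, g z = 0 :=
  intermediate_value_Ioo huv.le hg.continuousOn (⟨h1, h2⟩ : (0:ℝ) ∈ Ioo (g u) (g v))

lemma zero_in_Ioo' {g : ℝ → ℝ} (hg : Continuous g) {u v : ℝ} (huv : u < v)
    (h1 : 0 < g u) (h2 : g v < 0) : ∃ z ∈ Ioo u v, g z = 0 :=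
  intermediate_value_Ioo' huv.le hg.continuousOn (⟨h2, h1⟩ : (0:ℝ) ∈ Ioo (g v) (g u))

lemma sin_prod_periodic (a b : ℝ) :
    Function.Periodic (fun x => Real.sin (x - a) * Real.sin (x - b)) π := by
  intro x
  simp only [show ∀ c : ℝ, x + π - c = x - c + π by intro c; ring, Real.sin_add_pi]
  ring

lemma sin_prod_neg {a b x : ℝ} (hb : b < a + π) (h1 : a < x) (h2 : x < b) :
    Real.sin (x - a) * Real.sin (x - b) < 0 :=
  mul_neg_of_pos_of_neg (Real.sin_pos_of_pos_of_lt_pi (by linarith) (by linarith))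
    (Real.sin_neg_of_neg_of_neg_pi_lt (by linarith) (by linarith))

lemma sin_prod_pos {a b x : ℝ} (hab : a < b) (h1 : b < x) (h2 : x < a + π) :
    0 < Real.sin (x - a) * Real.sin (x - b) :=
  mul_pos (Real.sin_pos_of_pos_of_lt_pi (by linarith) (by linarith))
    (Real.sin_pos_of_pos_of_lt_pi (by linarith) (by linarith))

lemma four_zeros (g : ℝ → ℝ) (hg : Continuous g) (hper : Function.Periodic g π)
    (hF : ∀ a b : ℝ, ∃ F : ℝ → ℝ, Function.Periodic F π ∧
      ∀ x, HasDerivAt F (g x * (Real.sin (x - a) * Real.sin (x - b))) x) :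
    ∃ z : Fin 4 → ℝ, Function.Injective z ∧ (∀ i, z i ∈ Ico (0:ℝ) π) ∧ ∀ i, g (z i) = 0 := by
  by_contra hcon
  -- the integral identity
  have hint : ∀ a b t : ℝ, (∫ x in t..(t + π), g x * (Real.sin (x - a) * Real.sin (x - b))) = 0 := by
    intro a b t
    obtain ⟨F, hFper, hFd⟩ := hF a b
    rw [intervalIntegral.integral_eq_sub_of_hasDerivAt (fun x _ => hFd x)
      (((hg.mul (by fun_prop)).intervalIntegrable _ _))]
    rw [hFper t, sub_self]
  -- from four distinct zeros in a window of length π, get a contradiction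
  have key : ∀ t x0 x1 x2 x3 : ℝ, x0 < x1 → x1 < x2 → x2 < x3 →
      x0 ∈ Ico t (t + π) → x1 ∈ Ico t (t + π) → x2 ∈ Ico t (t + π) → x3 ∈ Ico t (t + π) →
      g x0 = 0 → g x1 = 0 → g x2 = 0 → g x3 = 0 → False := by
    intro t x0 x1 x2 x3 h01 h12 h23 m0 m1 m2 m3 g0 g1 g2 g3
    have hr_mem : ∀ y : ℝ, y - ⌊y / π⌋ * π ∈ Ico 0 π := fun y =>
      ⟨Int.sub_floor_div_mul_nonneg y pi_pos, Int.sub_floor_div_mul_lt y pi_pos⟩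
    have hrg : ∀ y : ℝ, g (y - ⌊y / π⌋ * π) = g y := fun y => hper.sub_int_mul_eq ⌊y / π⌋
    have hr_inj : ∀ u v, u ∈ Ico t (t + π) → v ∈ Ico t (t + π) →
        u - ⌊u / π⌋ * π = v - ⌊v / π⌋ * π → u = v := by
      intro u v hu hv huv
      have hd : u - v = ((⌊u / π⌋ - ⌊v / π⌋ : ℤ) : ℝ) * π := by push_cast; linarith
      have habs : |u - v| < π := by
        rw [abs_lt]
        obtain ⟨hu1, hu2⟩ := hu; obtain ⟨hv1, hv2⟩ := hv
        constructor <;> linarith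
      have hz : ⌊u / π⌋ - ⌊v / π⌋ = 0 := by
        by_contra h0
        have h1 : (1:ℤ) ≤ |⌊u / π⌋ - ⌊v / π⌋| := Int.one_le_abs h0
        have h2 : (1:ℝ) ≤ |((⌊u / π⌋ - ⌊v / π⌋ : ℤ) : ℝ)| := by
          rw [← Int.cast_abs]; exact_mod_cast h1
        rw [hd, abs_mul, abs_of_pos pi_pos] at habs
        nlinarith [pi_pos]
      have : u - v = 0 := by rw [hd, hz]; push_cast; ring
      linarith
    have D : ∀ u v, u ∈ Ico t (t + π) → v ∈ Ico t (t + π) → u ≠ v →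
        u - ⌊u / π⌋ * π ≠ v - ⌊v / π⌋ * π := fun u v hu hv hne h => hne (hr_inj u v hu hv h)
    apply hcon
    refine ⟨![x0 - ⌊x0 / π⌋ * π, x1 - ⌊x1 / π⌋ * π, x2 - ⌊x2 / π⌋ * π, x3 - ⌊x3 / π⌋ * π],
      ?_, ?_, ?_⟩
    · intro i j hij
      fin_cases i <;> fin_cases j <;>
        simp only [Matrix.cons_val_zero, Matrix.cons_val_one, Matrix.cons_val_two,
          Matrix.cons_val_three, Matrix.head_cons, Matrix.tail_cons, Matrix.head_fin_const,
          Fin.mk_zero, Fin.mk_one, Fin.isValue] at hij ⊢ <;>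
        first
          | rfl
          | (exact absurd hij (D _ _ (by assumption) (by assumption) (by linarith)))
          | (exact absurd hij.symm (D _ _ (by assumption) (by assumption) (by linarith)))
    · intro i
      fin_cases i <;>
        simp only [Matrix.cons_val_zero, Matrix.cons_val_one, Matrix.cons_val_two,
          Matrix.cons_val_three, Matrix.head_cons, Matrix.tail_cons, Fin.isValue] <;>
        exact hr_mem _
    · intro i
      fin_cases i <;>
        simp only [Matrix.cons_val_zero, Matrix.cons_val_one, Matrix.cons_val_two,
          Matrix.cons_val_three, Matrix.head_cons, Matrix.tail_cons, Fin.isValue] <;>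
        simp [hrg, g0, g1, g2, g3]
  -- strict positivity of integrals
  have hpos_int : ∀ (t : ℝ) (h : ℝ → ℝ), Continuous h → (∀ x ∈ Icc t (t + π), 0 ≤ h x) →
      (∃ p ∈ Icc t (t + π), 0 < h p) → 0 < ∫ x in t..(t + π), h x := by
    intro t h hc hle hex
    exact intervalIntegral.integral_pos (by linarith [pi_pos]) hc.continuousOn
      (fun x hx => hle x ⟨hx.1.le, hx.2⟩) hex
  -- g takes a positive value
  have hexpos : ∃ p, 0 < g p := by
    by_contra hnp
    push_neg at hnp
    have hzero : ∀ x, g x = 0 := by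
      intro x
      by_contra hx0
      have hgx : g x < 0 := (hnp x).lt_of_ne hx0
      set a := x - π / 2 with ha
      set f : ℝ → ℝ := fun y => -(g y * (Real.sin (y - a) * Real.sin (y - a))) with hf
      have hfpos : 0 < ∫ y in (x - π/2)..((x - π/2) + π), f y := by
        apply hpos_int _ _ (by fun_prop)
        · intro y _
          simp only [hf, neg_nonneg]
          exact mul_nonpos_of_nonpos_of_nonneg (hnp y) (mul_self_nonneg _)
        · refine ⟨x, ⟨by linarith [pi_pos], by linarith [pi_pos]⟩, ?_⟩
          simp only [hf, ha, show x - (x - π/2) = π/2 by ring, Real.sin_pi_div_two,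
            mul_one, neg_pos]
          linarith
      have : (∫ y in (x - π/2)..((x - π/2) + π), f y) = 0 := by
        have h1 := hint a a (x - π/2)
        have : (∫ y in (x - π/2)..((x - π/2) + π),
            -(g y * (Real.sin (y - a) * Real.sin (y - a)))) =
            -∫ y in (x - π/2)..((x - π/2) + π), g y * (Real.sin (y - a) * Real.sin (y - a)) :=
          intervalIntegral.integral_neg
        rw [hf, this, h1, neg_zero]
      linarith
    exact key 0 0 (π/4) (π/2) (3*π/4) (by linarith [pi_pos]) (by linarith [pi_pos])
      (by linarith [pi_pos])
      ⟨le_refl _, by linarith [pi_pos]⟩ ⟨by linarith [pi_pos], by linarith [pi_pos]⟩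
      ⟨by linarith [pi_pos], by linarith [pi_pos]⟩ ⟨by linarith [pi_pos], by linarith [pi_pos]⟩
      (hzero _) (hzero _) (hzero _) (hzero _)
  -- g takes a negative value
  have hexneg : ∃ q, g q < 0 := by
    by_contra hnq
    push_neg at hnq
    have hzero : ∀ x, g x = 0 := by
      intro x
      by_contra hx0
      have hgx : 0 < g x := (hnq x).lt_of_ne (Ne.symm hx0)
      set a := x - π / 2 with ha
      set f : ℝ → ℝ := fun y => g y * (Real.sin (y - a) * Real.sin (y - a)) with hf
      have hfpos : 0 < ∫ y in (x - π/2)..((x - π/2) + π), f y := by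
        apply hpos_int _ _ (by fun_prop)
        · intro y _
          exact mul_nonneg (hnq y) (mul_self_nonneg _)
        · refine ⟨x, ⟨by linarith [pi_pos], by linarith [pi_pos]⟩, ?_⟩
          simp only [hf, ha, show x - (x - π/2) = π/2 by ring, Real.sin_pi_div_two, mul_one]
          linarith
      have := hint a a (x - π/2)
      rw [← hf] at this
      linarith
    exact key 0 0 (π/4) (π/2) (3*π/4) (by linarith [pi_pos]) (by linarith [pi_pos])
      (by linarith [pi_pos])
      ⟨le_refl _, by linarith [pi_pos]⟩ ⟨by linarith [pi_pos], by linarith [pi_pos]⟩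
      ⟨by linarith [pi_pos], by linarith [pi_pos]⟩ ⟨by linarith [pi_pos], by linarith [pi_pos]⟩
      (hzero _) (hzero _) (hzero _) (hzero _)
  obtain ⟨p, hp⟩ := hexpos
  obtain ⟨q, hq⟩ := hexneg
  -- representative of q in (p, p + π)
  set k : ℤ := ⌈(p - q) / π⌉ with hk
  set q' : ℝ := q + k * π with hq'def
  have hgq' : g q' < 0 := by
    have : q' = q - (-k : ℤ) * π := by push_cast; ring
    rw [this, hper.sub_int_mul_eq]
    exact hq
  have hq'1 : p ≤ q' := by
    have h1 := Int.le_ceil ((p - q) / π)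
    rw [← hk] at h1
    have h2 : p - q ≤ k * π := by
      rw [div_le_iff₀ pi_pos] at h1
      linarith
    simp only [hq'def]; linarith
  have hq'2 : q' < p + π := by
    have h1 := Int.ceil_lt_add_one ((p - q) / π)
    rw [← hk] at h1
    have h2 : ((k : ℝ) - 1) * π < p - q := by
      rw [← lt_div_iff₀ pi_pos]
      linarith
    simp only [hq'def]; nlinarith [pi_pos]
  have hpq' : p < q' := lt_of_le_of_ne hq'1 (fun h => by rw [← h] at hgq'; linarith)
  have hgpπ : 0 < g (p + π) := by rw [hper p]; exact hp
  -- first and last zeros in [p, q']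
  have hclosed : IsClosed {x : ℝ | g x = 0} := isClosed_eq hg continuous_const
  set A : Set ℝ := {x | g x = 0} ∩ Icc p q' with hA
  have hAne : A.Nonempty := by
    obtain ⟨z, hz, hz0⟩ := zero_in_Ioo' hg hpq' hp hgq'
    exact ⟨z, hz0, ⟨hz.1.le, hz.2.le⟩⟩
  have hAclosed : IsClosed A := hclosed.inter isClosed_Icc
  have hAbddA : BddAbove A := bddAbove_Icc.mono inter_subset_right
  have hAbddB : BddBelow A := bddBelow_Icc.mono inter_subset_right
  set a := sSup A with hadef
  set a' := sInf A with ha'def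
  have haA : a ∈ A := hAclosed.csSup_mem hAne hAbddA
  have ha'A : a' ∈ A := hAclosed.csInf_mem hAne hAbddB
  have hga : g a = 0 := haA.1
  have hga' : g a' = 0 := ha'A.1
  have ha'a : a' ≤ a := csInf_le_csSup hAne hAbddB hAbddA
  have hpa' : p < a' := lt_of_le_of_ne ha'A.2.1 (fun h => by rw [h] at hp; rw [hga'] at hp; linarith)
  have haq' : a < q' := lt_of_le_of_ne haA.2.2 (fun h => by rw [← h] at hgq'; rw [hga] at hgq'; linarith)
  -- first and last zeros in [q', p + π]
  set B : Set ℝ := {x | g x = 0} ∩ Icc q' (p + π) with hB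
  have hBne : B.Nonempty := by
    obtain ⟨z, hz, hz0⟩ := zero_in_Ioo hg hq'2 hgq' hgpπ
    exact ⟨z, hz0, ⟨hz.1.le, hz.2.le⟩⟩
  have hBclosed : IsClosed B := hclosed.inter isClosed_Icc
  have hBbddA : BddAbove B := bddAbove_Icc.mono inter_subset_right
  have hBbddB : BddBelow B := bddBelow_Icc.mono inter_subset_right
  set b := sInf B with hbdef
  set b' := sSup B with hb'def
  have hbB : b ∈ B := hBclosed.csInf_mem hBne hBbddB
  have hb'B : b' ∈ B := hBclosed.csSup_mem hBne hBbddA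
  have hgb : g b = 0 := hbB.1
  have hgb' : g b' = 0 := hb'B.1
  have hbb' : b ≤ b' := csInf_le_csSup hBne hBbddB hBbddA
  have hq'b : q' < b := lt_of_le_of_ne hbB.2.1 (fun h => by rw [← h] at hgb; linarith)
  have hb'pπ : b' < p + π := lt_of_le_of_ne hb'B.2.2 (fun h => by rw [h] at hgb'; rw [hgb'] at hgpπ; linarith)
  -- sign information
  have hneg_aq : ∀ x, a < x → x ≤ q' → g x < 0 := by
    intro x hax hxq
    rcases lt_trichotomy (g x) 0 with h | h | h
    · exact h
    · exfalso
      have hxA : x ∈ A := ⟨h, ⟨by linarith [haA.2.1], hxq⟩⟩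
      have := le_csSup hAbddA hxA
      linarith
    · exfalso
      have hxq' : x < q' := lt_of_le_of_ne hxq (fun h' => by rw [h'] at h; linarith)
      obtain ⟨z, hz, hz0⟩ := zero_in_Ioo' hg hxq' h hgq'
      have hzA : z ∈ A := ⟨hz0, ⟨by linarith [haA.2.1, hz.1], hz.2.le⟩⟩
      have := le_csSup hAbddA hzA
      linarith [hz.1]
  have hneg_qb : ∀ x, q' ≤ x → x < b → g x < 0 := by
    intro x hqx hxb
    rcases lt_trichotomy (g x) 0 with h | h | h
    · exact h
    · exfalso
      have hxB : x ∈ B := ⟨h, ⟨hqx, by linarith [hbB.2.2]⟩⟩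
      have := csInf_le hBbddB hxB
      linarith
    · exfalso
      have hq'x : q' < x := lt_of_le_of_ne hqx (fun h' => by rw [← h'] at h; linarith)
      obtain ⟨z, hz, hz0⟩ := zero_in_Ioo hg hq'x hgq' h
      have hzB : z ∈ B := ⟨hz0, ⟨hz.1.le, by linarith [hbB.2.2, hz.2]⟩⟩
      have := csInf_le hBbddB hzB
      linarith [hz.2]
  have hpos_pa' : ∀ x, p ≤ x → x < a' → 0 < g x := by
    intro x hpx hxa
    rcases lt_trichotomy (g x) 0 with h | h | h
    · exfalso
      have hpx' : p < x := lt_of_le_of_ne hpx (fun h' => by rw [← h'] at h; linarith)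
      obtain ⟨z, hz, hz0⟩ := zero_in_Ioo' hg hpx' hp h
      have hzA : z ∈ A := ⟨hz0, ⟨hz.1.le, by linarith [ha'A.2.2, hz.2]⟩⟩
      have := csInf_le hAbddB hzA
      linarith [hz.2]
    · exfalso
      have hxA : x ∈ A := ⟨h, ⟨hpx, by linarith [ha'A.2.2]⟩⟩
      have := csInf_le hAbddB hxA
      linarith
    · exact h
  have hpos_b' : ∀ x, b' < x → x ≤ p + π → 0 < g x := by
    intro x hbx hxp
    rcases lt_trichotomy (g x) 0 with h | h | h
    · exfalso
      have hxp' : x < p + π := lt_of_le_of_ne hxp (fun h' => by rw [h'] at h; linarith)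
      obtain ⟨z, hz, hz0⟩ := zero_in_Ioo hg hxp' h hgpπ
      have hzB : z ∈ B := ⟨hz0, ⟨by linarith [hb'B.2.1, hz.1], hz.2.le⟩⟩
      have := le_csSup hBbddA hzB
      linarith [hz.1]
    · exfalso
      have hxB : x ∈ B := ⟨h, ⟨by linarith [hb'B.2.1], hxp⟩⟩
      have := le_csSup hBbddA hxB
      linarith
    · exact h
  have haq'2 : a' ≤ q' := ha'A.2.2
  have hq'b' : q' ≤ b' := hb'B.2.1
  have hmid_ab : ∀ x, a < x → x < b → g x < 0 := by
    intro x h1 h2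
    rcases le_or_gt x q' with h | h
    · exact hneg_aq x h1 h
    · exact hneg_qb x h.le h2
  have hab : a < b := lt_trans haq' hq'b
  -- the two-zero contradiction
  have pairC : ∀ α β, g α = 0 → g β = 0 → p < α → α < β → β < p + π → α < q' → q' < β →
      (∀ x, α < x → x < β → g x ≤ 0) → (∀ x, p ≤ x → x < α → 0 ≤ g x) →
      (∀ x, β < x → x ≤ p + π → 0 ≤ g x) → False := by
    intro α β hgα hgβ hpα hαβ hβp hαq' hq'β hmid hleft hright
    have hβαπ : β < α + π := by linarith
    set T : ℝ → ℝ := fun x => Real.sin (x - α) * Real.sin (x - β) with hT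
    have hTper := sin_prod_periodic α β
    have h0 : (∫ x in p..(p + π), g x * T x) = 0 := hint α β p
    have hnonneg : ∀ x ∈ Icc p (p + π), 0 ≤ g x * T x := by
      intro x hx
      rcases lt_trichotomy x α with h1 | h1 | h1
      · have hTx : 0 < T x := by
          have hper' : T (x + π) = T x := hTper x
          rw [← hper']
          exact sin_prod_pos hαβ (by linarith [hx.1]) (by linarith)
        exact mul_nonneg (hleft x hx.1 h1) hTx.le
      · have : T x = 0 := by simp [hT, h1]
        rw [this, mul_zero]
      · rcases lt_trichotomy x β with h2 | h2 | h2
        · exact mul_nonneg_iff.mpr (Or.inr ⟨hmid x h1 h2, (sin_prod_neg hβαπ h1 h2).le⟩)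
        · have : T x = 0 := by simp [hT, h2]
          rw [this, mul_zero]
        · exact mul_nonneg (hright x h2 hx.2) (sin_prod_pos hαβ h2 (by linarith [hx.2])).le
    have hstrict : 0 < g q' * T q' :=
      mul_pos_of_neg_of_neg hgq' (sin_prod_neg hβαπ hαq' hq'β)
    have hpos := hpos_int p (fun x => g x * T x) (hg.mul (by fun_prop)) hnonneg
      ⟨q', ⟨by linarith, by linarith⟩, hstrict⟩
    rw [h0] at hpos
    exact lt_irrefl 0 hpos
  -- final case analysis
  rcases eq_or_lt_of_le ha'a with haa | haa <;> rcases eq_or_lt_of_le hbb' with hbb | hbb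
  · -- a' = a, b = b'
    apply pairC a b hga hgb (by linarith) hab (by linarith) haq' hq'b
    · exact fun x h1 h2 => (hmid_ab x h1 h2).le
    · intro x h1 h2; exact (hpos_pa' x h1 (by rw [← haa] at h2; exact h2)).le
    · intro x h1 h2; exact (hpos_b' x (by rw [← hbb]; exact h1) h2).le
  · -- a' = a, b < b' : look at the gap (b, b')
    by_cases hc1 : ∀ x, b < x → x < b' → g x ≤ 0
    · apply pairC a b' hga hgb' (by linarith) (by linarith) hb'pπ haq' (by linarith)
      · intro x h1 h2
        rcases lt_trichotomy x b with h | h | h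
        · exact (hmid_ab x h1 h).le
        · rw [h, hgb]
        · exact hc1 x h h2
      · intro x h1 h2; exact (hpos_pa' x h1 (by rw [← haa] at h2; exact h2)).le
      · intro x h1 h2; exact (hpos_b' x h1 h2).le
    · push_neg at hc1
      obtain ⟨v, hv1, hv2, hv3⟩ := hc1
      by_cases hc2 : ∀ x, b < x → x < b' → 0 ≤ g x
      · apply pairC a b hga hgb (by linarith) hab (by linarith) haq' hq'b
        · exact fun x h1 h2 => (hmid_ab x h1 h2).le
        · intro x h1 h2; exact (hpos_pa' x h1 (by rw [← haa] at h2; exact h2)).le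
        · intro x h1 h2
          rcases lt_trichotomy x b' with h | h | h
          · exact hc2 x h1 h
          · rw [h, hgb']
          · exact (hpos_b' x h h2).le
      · push_neg at hc2
        obtain ⟨w, hw1, hw2, hw3⟩ := hc2
        rcases lt_or_gt_of_ne (fun h : v = w => by rw [h] at hv3; linarith) with hvw | hvw
        · obtain ⟨z, hz, hz0⟩ := zero_in_Ioo' hg hvw hv3 hw3
          exact key p a b z b' hab (by linarith [hz.1]) (by linarith [hz.2])
            ⟨haA.2.1, by linarith⟩ ⟨by linarith, by linarith⟩
            ⟨by linarith [hz.1, hz.2], by linarith [hz.1, hz.2]⟩ ⟨by linarith, hb'pπ⟩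
            hga hgb hz0 hgb'
        · obtain ⟨z, hz, hz0⟩ := zero_in_Ioo hg hvw hw3 hv3
          exact key p a b z b' hab (by linarith [hz.1]) (by linarith [hz.2])
            ⟨haA.2.1, by linarith⟩ ⟨by linarith, by linarith⟩
            ⟨by linarith [hz.1, hz.2], by linarith [hz.1, hz.2]⟩ ⟨by linarith, hb'pπ⟩
            hga hgb hz0 hgb'
  · -- a' < a, b = b' : look at the gap (a', a)
    by_cases hc1 : ∀ x, a' < x → x < a → g x ≤ 0
    · apply pairC a' b hga' hgb hpa' (by linarith) (by linarith) (by linarith) hq'b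
      · intro x h1 h2
        rcases lt_trichotomy x a with h | h | h
        · exact hc1 x h1 h
        · rw [h, hga]
        · exact (hmid_ab x h h2).le
      · intro x h1 h2; exact (hpos_pa' x h1 h2).le
      · intro x h1 h2; exact (hpos_b' x (by rw [← hbb]; exact h1) h2).le
    · push_neg at hc1
      obtain ⟨v, hv1, hv2, hv3⟩ := hc1
      by_cases hc2 : ∀ x, a' < x → x < a → 0 ≤ g x
      · apply pairC a b hga hgb (by linarith) hab (by linarith) haq' hq'b
        · exact fun x h1 h2 => (hmid_ab x h1 h2).le
        · intro x h1 h2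
          rcases lt_trichotomy x a' with h | h | h
          · exact (hpos_pa' x h1 h).le
          · rw [h, hga']
          · exact hc2 x h h2
        · intro x h1 h2; exact (hpos_b' x (by rw [← hbb]; exact h1) h2).le
      · push_neg at hc2
        obtain ⟨w, hw1, hw2, hw3⟩ := hc2
        rcases lt_or_gt_of_ne (fun h : v = w => by rw [h] at hv3; linarith) with hvw | hvw
        · obtain ⟨z, hz, hz0⟩ := zero_in_Ioo' hg hvw hv3 hw3
          exact key p a' z a b (by linarith [hz.1]) (by linarith [hz.2]) hab
            ⟨ha'A.2.1, by linarith⟩ ⟨by linarith [hz.1, hz.2], by linarith [hz.1, hz.2]⟩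
            ⟨by linarith, by linarith⟩ ⟨by linarith, by linarith⟩
            hga' hz0 hga hgb
        · obtain ⟨z, hz, hz0⟩ := zero_in_Ioo hg hvw hw3 hv3
          exact key p a' z a b (by linarith [hz.1]) (by linarith [hz.2]) hab
            ⟨ha'A.2.1, by linarith⟩ ⟨by linarith [hz.1, hz.2], by linarith [hz.1, hz.2]⟩
            ⟨by linarith, by linarith⟩ ⟨by linarith, by linarith⟩
            hga' hz0 hga hgb
  · -- a' < a and b < b' : four distinct zeros
    exact key p a' a b b' haa hab hbb
      ⟨ha'A.2.1, by linarith⟩ ⟨by linarith, by linarith⟩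
      ⟨by linarith, by linarith⟩ ⟨by linarith, hb'pπ⟩
      hga' hga hgb hgb'

/-- Let `s` be the support function of a smooth, origin-symmetric
(`π`-periodic), strictly convex closed curve and let `σ = s 𝔯^(1/3)` be its affine
support function. Then `σ'` vanishes at at least eight distinct points of one
period `[0, 2π)`. -/
theorem affine_support_function_eight_critical_points
    (s : ℝ → ℝ) (hsmooth : ContDiff ℝ (⊤ : ℕ∞) s) (hpos : ∀ θ, 0 < s θ)
    (hper : Function.Periodic s π) (hconv : ∀ θ, 0 < rad s θ)
    (σ : ℝ → ℝ) (hσ : σ = fun θ => s θ * rad s θ ^ ((1:ℝ) / 3)) :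
    ∃ c : Fin 8 → ℝ, Function.Injective c ∧
      (∀ i, c i ∈ Ico (0:ℝ) (2 * π)) ∧ ∀ i, deriv σ (c i) = 0 := by
  set s1 := deriv s with hs1def
  set s2 := deriv s1 with hs2def
  set s3 := deriv s2 with hs3def
  have hcd : ∀ f : ℝ → ℝ, ContDiff ℝ (⊤ : ℕ∞) f → ContDiff ℝ (⊤ : ℕ∞) (deriv f) := by
    intro f hf
    have := hf.iterate_deriv 1
    simpa using this
  have hc1 : ContDiff ℝ (⊤ : ℕ∞) s1 := hcd s hsmooth
  have hc2 : ContDiff ℝ (⊤ : ℕ∞) s2 := hcd s1 hc1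
  have hc3 : ContDiff ℝ (⊤ : ℕ∞) s3 := hcd s2 hc2
  have hds : ∀ x, HasDerivAt s (s1 x) x :=
    fun x => ((hsmooth.differentiable (by simp)) x).hasDerivAt
  have hds1 : ∀ x, HasDerivAt s1 (s2 x) x :=
    fun x => ((hc1.differentiable (by simp)) x).hasDerivAt
  have hds2 : ∀ x, HasDerivAt s2 (s3 x) x :=
    fun x => ((hc2.differentiable (by simp)) x).hasDerivAt
  -- periodicity of derivatives
  have hpd : ∀ f : ℝ → ℝ, Function.Periodic f π → Function.Periodic (deriv f) π := by
    intro f hf x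
    rw [← deriv_comp_add_const]
    congr 1
    funext y
    exact hf y
  have hper1 : Function.Periodic s1 π := hpd s hper
  have hper2 : Function.Periodic s2 π := hpd s1 hper1
  have hper3 : Function.Periodic s3 π := hpd s2 hper2
  have hrad : ∀ θ, rad s θ = s2 θ + s θ := by
    intro θ
    simp only [rad, hs2def, hs1def]
    rw [iteratedDeriv_succ, iteratedDeriv_one]
  -- the key function G and its antiderivative identities
  set G : ℝ → ℝ := fun θ => 3 * s1 θ * (s2 θ + s θ) + s θ * (s3 θ + s1 θ) with hGdef
  have hGcont : Continuous G := by
    apply Continuous.add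
    · exact ((continuous_const.mul hc1.continuous).mul (hc2.continuous.add hsmooth.continuous))
    · exact (hsmooth.continuous.mul (hc3.continuous.add hc1.continuous))
  have hGper : Function.Periodic G π := by
    intro x
    simp only [hGdef, hper x, hper1 x, hper2 x, hper3 x]
  -- antiderivatives
  have hd0 : ∀ x : ℝ, HasDerivAt (fun y => s1 y ^ 2 + 2 * s y ^ 2 + s y * s2 y) (G x) x := by
    intro x
    have h := (((hds1 x).pow 2).add ((((hds x).pow 2)).const_mul 2)).add
      ((hds x).mul (hds2 x))
    refine h.congr_deriv ?_
    simp only [hGdef]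
    ring
  have hdc : ∀ x : ℝ, HasDerivAt
      (fun y => Real.cos (2*y) * (s1 y ^ 2 + s y * s2 y) + 2 * Real.sin (2*y) * (s y * s1 y))
      (G x * Real.cos (2*x)) x := by
    intro x
    have hcos : HasDerivAt (fun y : ℝ => Real.cos (2*y)) (-2 * Real.sin (2*x)) x := by
      have := (Real.hasDerivAt_cos (2*x)).comp x ((hasDerivAt_id x).const_mul 2)
      refine this.congr_deriv ?_
      ring
    have hsin : HasDerivAt (fun y : ℝ => Real.sin (2*y)) (2 * Real.cos (2*x)) x := by
      have := (Real.hasDerivAt_sin (2*x)).comp x ((hasDerivAt_id x).const_mul 2)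
      refine this.congr_deriv ?_
      ring
    have h := (hcos.mul (((hds1 x).pow 2).add ((hds x).mul (hds2 x)))).add
      ((hsin.const_mul 2).mul ((hds x).mul (hds1 x)))
    refine h.congr_deriv ?_
    simp only [hGdef, Pi.add_apply, Pi.mul_apply, Pi.pow_apply]
    ring
  have hdsin : ∀ x : ℝ, HasDerivAt
      (fun y => Real.sin (2*y) * (s1 y ^ 2 + s y * s2 y) - 2 * Real.cos (2*y) * (s y * s1 y))
      (G x * Real.sin (2*x)) x := by
    intro x
    have hcos : HasDerivAt (fun y : ℝ => Real.cos (2*y)) (-2 * Real.sin (2*x)) x := by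
      have := (Real.hasDerivAt_cos (2*x)).comp x ((hasDerivAt_id x).const_mul 2)
      refine this.congr_deriv ?_
      ring
    have hsin : HasDerivAt (fun y : ℝ => Real.sin (2*y)) (2 * Real.cos (2*x)) x := by
      have := (Real.hasDerivAt_sin (2*x)).comp x ((hasDerivAt_id x).const_mul 2)
      refine this.congr_deriv ?_
      ring
    have h := (hsin.mul (((hds1 x).pow 2).add ((hds x).mul (hds2 x)))).sub
      ((hcos.const_mul 2).mul ((hds x).mul (hds1 x)))
    refine h.congr_deriv ?_
    simp only [hGdef, Pi.add_apply, Pi.mul_apply, Pi.pow_apply]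
    ring
  -- the full antiderivative family
  have hFfam : ∀ a b : ℝ, ∃ F : ℝ → ℝ, Function.Periodic F π ∧
      ∀ x, HasDerivAt F (G x * (Real.sin (x - a) * Real.sin (x - b))) x := by
    intro a b
    refine ⟨fun y => (Real.cos (a-b)/2) * (s1 y ^ 2 + 2 * s y ^ 2 + s y * s2 y)
      - (Real.cos (a+b)/2) * (Real.cos (2*y) * (s1 y ^ 2 + s y * s2 y) + 2 * Real.sin (2*y) * (s y * s1 y))
      - (Real.sin (a+b)/2) * (Real.sin (2*y) * (s1 y ^ 2 + s y * s2 y) - 2 * Real.cos (2*y) * (s y * s1 y)),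
      ?_, ?_⟩
    · intro x
      simp only [hper x, hper1 x, hper2 x,
        show 2*(x+π) = 2*x + 2*π by ring, Real.cos_add_two_pi, Real.sin_add_two_pi]
    · intro x
      have h := (((hd0 x).const_mul (Real.cos (a-b)/2)).sub
        ((hdc x).const_mul (Real.cos (a+b)/2))).sub ((hdsin x).const_mul (Real.sin (a+b)/2))
      refine h.congr_deriv ?_
      have htrig : Real.sin (x - a) * Real.sin (x - b) =
          Real.cos (a - b) / 2 - Real.cos (a + b) / 2 * Real.cos (2*x)
            - Real.sin (a + b) / 2 * Real.sin (2*x) := by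
        rw [Real.sin_sub, Real.sin_sub, Real.cos_sub, Real.cos_add, Real.sin_add,
          Real.cos_two_mul, Real.sin_two_mul]
        linear_combination (Real.cos a * Real.cos b) * (Real.sin_sq_add_cos_sq x)
      rw [htrig]
      ring
  -- zeros of G are critical points of σ
  have hderivσ : ∀ θ, G θ = 0 → deriv σ θ = 0 := by
    intro θ hGθ
    have hradf : rad s = fun t => s2 t + s t := funext hrad
    set R := s2 θ + s θ with hRdef
    have hRpos : 0 < R := by rw [hRdef, ← hrad θ]; exact hconv θ
    have hdR : HasDerivAt (fun t => rad s t) (s3 θ + s1 θ) θ := by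
      rw [hradf]
      exact (hds2 θ).add (hds θ)
    have hdrpow : HasDerivAt (fun t => rad s t ^ ((1:ℝ)/3))
        ((s3 θ + s1 θ) * ((1:ℝ)/3) * rad s θ ^ ((1:ℝ)/3 - 1)) θ :=
      hdR.rpow_const (Or.inl (by rw [hrad θ, ← hRdef]; exact ne_of_gt hRpos))
    have hdσ : HasDerivAt σ
        (s1 θ * rad s θ ^ ((1:ℝ)/3)
          + s θ * ((s3 θ + s1 θ) * ((1:ℝ)/3) * rad s θ ^ ((1:ℝ)/3 - 1))) θ := by
      rw [hσ]
      exact (hds θ).mul hdrpow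
    have hRR : R * R ^ ((1:ℝ)/3 - 1) = R ^ ((1:ℝ)/3) := by
      rw [show R * R ^ ((1:ℝ)/3 - 1) = R ^ (1:ℝ) * R ^ ((1:ℝ)/3 - 1) by rw [Real.rpow_one],
        ← Real.rpow_add hRpos]
      norm_num
    have h5 : s θ * (s3 θ + s1 θ) = -(3 * s1 θ * R) := by
      simp only [hGdef] at hGθ
      rw [hRdef]
      linarith
    rw [hdσ.deriv, hrad θ, ← hRdef]
    calc s1 θ * R ^ ((1:ℝ)/3) + s θ * ((s3 θ + s1 θ) * ((1:ℝ)/3) * R ^ ((1:ℝ)/3 - 1))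
        = s1 θ * R ^ ((1:ℝ)/3) + ((1:ℝ)/3) * (s θ * (s3 θ + s1 θ)) * R ^ ((1:ℝ)/3 - 1) := by
          ring
      _ = s1 θ * R ^ ((1:ℝ)/3) + ((1:ℝ)/3) * (-(3 * s1 θ * R)) * R ^ ((1:ℝ)/3 - 1) := by
          rw [h5]
      _ = s1 θ * R ^ ((1:ℝ)/3) - s1 θ * (R * R ^ ((1:ℝ)/3 - 1)) := by ring
      _ = 0 := by rw [hRR]; ring
  -- σ and its derivative are π-periodic
  have hσper : Function.Periodic σ π := by
    intro x
    rw [hσ]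
    simp only
    rw [show rad s (x + π) = rad s x by rw [hrad (x+π), hrad x, hper x, hper2 x], hper x]
  have hdσper : Function.Periodic (deriv σ) π := hpd σ hσper
  -- apply the four-zero lemma
  obtain ⟨z, hzinj, hzmem, hzzero⟩ := four_zeros G hGcont hGper hFfam
  refine ⟨fun i => if h : (i : ℕ) < 4 then z ⟨(i : ℕ), h⟩ else z ⟨(i : ℕ) - 4, by omega⟩ + π,
    ?_, ?_, ?_⟩
  · intro i j hij
    by_cases hi : (i : ℕ) < 4 <;> by_cases hj : (j : ℕ) < 4 <;>
      simp only [hi, hj, dif_pos, dif_neg, not_false_iff] at hij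
    · have h1 := hzinj hij
      have h2 : (i : ℕ) = (j : ℕ) := by simpa [Fin.ext_iff] using h1
      exact Fin.ext (by omega)
    · exfalso
      have h1 := hzmem ⟨(i : ℕ), hi⟩
      have h2 := hzmem ⟨(j : ℕ) - 4, by omega⟩
      rw [hij] at h1
      linarith [h1.2, h2.1]
    · exfalso
      have h1 := hzmem ⟨(j : ℕ), hj⟩
      have h2 := hzmem ⟨(i : ℕ) - 4, by omega⟩
      rw [← hij] at h1
      linarith [h1.2, h2.1]
    · have h1 : z ⟨(i : ℕ) - 4, by omega⟩ = z ⟨(j : ℕ) - 4, by omega⟩ := by linarith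
      have h2 := hzinj h1
      have h3 : (i : ℕ) - 4 = (j : ℕ) - 4 := by simpa [Fin.ext_iff] using h2
      exact Fin.ext (by omega)
  · intro i
    by_cases hi : (i : ℕ) < 4 <;> simp only [hi, dif_pos, dif_neg, not_false_iff]
    · have h1 := hzmem ⟨(i : ℕ), hi⟩
      exact ⟨h1.1, by linarith [h1.2, pi_pos]⟩
    · have h1 := hzmem ⟨(i : ℕ) - 4, by omega⟩
      exact ⟨by linarith [h1.1, pi_pos], by linarith [h1.2]⟩
  · intro i
    by_cases hi : (i : ℕ) < 4 <;> simp only [hi, dif_pos, dif_neg, not_false_iff]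
    · exact hderivσ _ (hzzero ⟨(i : ℕ), hi⟩)
    · rw [hdσper]
      exact hderivσ _ (hzzero ⟨(i : ℕ) - 4, by omega⟩)

end
end

section
/- Let s: ℝ → ℝ be a smooth, positive, π-periodic function, and define the curve Λ(θ) = (x(θ), y(θ)) by x(θ) := ∫₀^θ cos(α)/s(α)³ dα and y(θ) := ∫₀^θ sin(α)/s(α)³ dα. Then: (a) Λ is closed, i.e. x(2π) = 0 and y(2π) = 0; (b) x'(θ)y''(θ) − y'(θ)x''(θ) = 1/s(θ)⁶ and the Euclidean curvature of Λ satisfies (x'y'' − y'x'')/((x'² + y'²)^(3/2)) = s³ at every θ. -/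
open Real Set Filter MeasureTheory

noncomputable section

/-- For a smooth, positive, `π`-periodic `s`, the curve
`Λ(θ) = (∫₀^θ cos α/s(α)³ dα, ∫₀^θ sin α/s(α)³ dα)` is closed, satisfies
`x'y'' - y'x'' = 1/s⁶`, and its Euclidean curvature equals `s³`. -/
theorem dual_curve_closed_and_curvature
    (s : ℝ → ℝ) (hsmooth : ContDiff ℝ (⊤ : ℕ∞) s) (hpos : ∀ θ, 0 < s θ)
    (hper : Function.Periodic s π)
    (x y : ℝ → ℝ)
    (hx : x = fun θ => ∫ α in (0:ℝ)..θ, Real.cos α / s α ^ 3)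
    (hy : y = fun θ => ∫ α in (0:ℝ)..θ, Real.sin α / s α ^ 3) :
    (x (2 * π) = 0 ∧ y (2 * π) = 0) ∧
      (∀ θ, deriv x θ * deriv (deriv y) θ - deriv y θ * deriv (deriv x) θ = 1 / s θ ^ 6) ∧
      ∀ θ,
        (deriv x θ * deriv (deriv y) θ - deriv y θ * deriv (deriv x) θ) /
            ((deriv x θ ^ 2 + deriv y θ ^ 2) ^ ((3:ℝ) / 2)) = s θ ^ 3 := by
  have hs0 : ∀ θ, s θ ≠ 0 := fun θ => (hpos θ).ne'
  have hs3 : ∀ θ, s θ ^ 3 ≠ 0 := fun θ => pow_ne_zero 3 (hs0 θ)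
  have hscont : Continuous s := hsmooth.continuous
  have hfc : Continuous (fun α => Real.cos α / s α ^ 3) :=
    Real.continuous_cos.div (hscont.pow 3) (fun α => hs3 α)
  have hgc : Continuous (fun α => Real.sin α / s α ^ 3) :=
    Real.continuous_sin.div (hscont.pow 3) (fun α => hs3 α)
  -- closedness
  have key : ∀ f : ℝ → ℝ, Continuous f → (∀ α, f (α + π) = -f α) →
      (∫ α in (0:ℝ)..(2*π), f α) = 0 := by
    intro f hf hanti
    have h1 : (∫ α in (0:ℝ)..π, f α) + (∫ α in π..(2*π), f α)
        = ∫ α in (0:ℝ)..(2*π), f α :=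
      intervalIntegral.integral_add_adjacent_intervals (hf.intervalIntegrable _ _)
        (hf.intervalIntegrable _ _)
    have h2 : (∫ α in (0:ℝ)..π, f (α + π)) = ∫ α in π..(2*π), f α := by
      rw [intervalIntegral.integral_comp_add_right, zero_add, two_mul]
    have h3 : (∫ α in (0:ℝ)..π, f (α + π)) = -∫ α in (0:ℝ)..π, f α := by
      simp only [hanti, intervalIntegral.integral_neg]
    rw [← h1, ← h2, h3]; ring
  have hxclosed : x (2 * π) = 0 := by
    rw [hx]
    exact key _ hfc (fun α => by
      rw [Real.cos_add_pi, hper α, neg_div])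
  have hyclosed : y (2 * π) = 0 := by
    rw [hy]
    exact key _ hgc (fun α => by
      rw [Real.sin_add_pi, hper α, neg_div])
  -- first derivatives
  have hdx : deriv x = fun θ => Real.cos θ / s θ ^ 3 := by
    funext θ; rw [hx]; exact Continuous.deriv_integral _ hfc 0 θ
  have hdy : deriv y = fun θ => Real.sin θ / s θ ^ 3 := by
    funext θ; rw [hy]; exact Continuous.deriv_integral _ hgc 0 θ
  -- second derivatives
  have hsd : ∀ θ, HasDerivAt s (deriv s θ) θ := fun θ =>
    (hsmooth.differentiable (by simp) θ).hasDerivAt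
  have hddx : ∀ θ, deriv (deriv x) θ
      = (-Real.sin θ * s θ ^ 3 - Real.cos θ * ((3:ℕ) * s θ ^ 2 * deriv s θ)) / (s θ ^ 3) ^ 2 := by
    intro θ
    rw [hdx]
    exact (((Real.hasDerivAt_cos θ).div ((hsd θ).pow 3) (hs3 θ))).deriv
  have hddy : ∀ θ, deriv (deriv y) θ
      = (Real.cos θ * s θ ^ 3 - Real.sin θ * ((3:ℕ) * s θ ^ 2 * deriv s θ)) / (s θ ^ 3) ^ 2 := by
    intro θ
    rw [hdy]
    exact (((Real.hasDerivAt_sin θ).div ((hsd θ).pow 3) (hs3 θ))).deriv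
  have hwronsk : ∀ θ, deriv x θ * deriv (deriv y) θ - deriv y θ * deriv (deriv x) θ
      = 1 / s θ ^ 6 := by
    intro θ
    rw [hddx θ, hddy θ, hdx, hdy]
    have htrig := Real.sin_sq_add_cos_sq θ
    have h0 := hs0 θ
    field_simp
    linear_combination (s θ) * htrig
  refine ⟨⟨hxclosed, hyclosed⟩, hwronsk, fun θ => ?_⟩
  have hsum : deriv x θ ^ 2 + deriv y θ ^ 2 = ((s θ ^ 3)⁻¹) ^ 2 := by
    simp only [hdx, hdy]
    have htrig := Real.sin_sq_add_cos_sq θ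
    field_simp
    rw [Real.cos_sq_add_sin_sq]
  have htpos : (0:ℝ) < (s θ ^ 3)⁻¹ := inv_pos.mpr (pow_pos (hpos θ) 3)
  have hpow : (((s θ ^ 3)⁻¹) ^ 2 : ℝ) ^ ((3:ℝ)/2) = ((s θ ^ 3)⁻¹) ^ 3 := by
    rw [← Real.rpow_natCast ((s θ ^ 3)⁻¹) 2, ← Real.rpow_mul htpos.le,
      ← Real.rpow_natCast ((s θ ^ 3)⁻¹) 3]
    norm_num
  rw [hwronsk θ, hsum, hpow]
  have h0 := hs0 θ
  field_simp
end
end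

section
/- Let s: ℝ → ℝ be a smooth, positive, π-periodic function, and define x(θ) := ∫₀^θ cos(α)/s(α)³ dα and y(θ) := ∫₀^θ sin(α)/s(α)³ dα. Then the affine curvature of the curve (x, y) equals the cube of the affine support function of the curve with support function s: for all θ, (x''(θ)y'''(θ) − x'''(θ)y''(θ)) / (x'(θ)y''(θ) − x''(θ)y'(θ))^(5/3) − (1/2)·(d²/dθ²)[ (x'(θ)y''(θ) − x''(θ)y'(θ))^(−2/3) ] = s(θ)³·(s''(θ) + s(θ)). -/
open Real Set Filter MeasureTheory

noncomputable section

lemma dual_key1 (a b c si : ℝ) (ha : 0 < a) (h : si^2 + c^2 = 1) :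
    c / a^3 * ((c*a - 3*si*b)/a^4) - (-(si) * a - 3*c*b)/a^4 * (si/a^3) = (a^6)⁻¹ := by
  have ha' := ha.ne'
  field_simp
  linear_combination a * h

lemma dual_rpow5 (a : ℝ) (ha : 0 < a) : ((a^6)⁻¹ : ℝ) ^ ((5:ℝ)/3) = (a^10)⁻¹ := by
  rw [← Real.rpow_natCast a 6, ← Real.rpow_neg ha.le, ← Real.rpow_natCast a 10,
    ← Real.rpow_neg ha.le, ← Real.rpow_mul ha.le]
  norm_num

lemma dual_rpow4 (a : ℝ) (ha : 0 < a) : ((a^6)⁻¹ : ℝ) ^ (-(2:ℝ)/3) = a ^ 4 := by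
  rw [← Real.rpow_natCast a 6, ← Real.rpow_neg ha.le, ← Real.rpow_mul ha.le,
    ← Real.rpow_natCast a 4]
  norm_num

/-- For a smooth, positive, `π`-periodic `s`, the affine curvature of
the curve `(x, y) = (∫₀^θ cos α/s(α)³ dα, ∫₀^θ sin α/s(α)³ dα)` equals the cube
`σ³ = s³ (s'' + s)` of the affine support function of the curve with support
function `s`. -/
theorem dual_curve_affine_curvature
    (s : ℝ → ℝ) (hsmooth : ContDiff ℝ (⊤ : ℕ∞) s) (hpos : ∀ θ, 0 < s θ)
    (hper : Function.Periodic s π)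
    (x y : ℝ → ℝ)
    (hx : x = fun θ => ∫ α in (0:ℝ)..θ, Real.cos α / s α ^ 3)
    (hy : y = fun θ => ∫ α in (0:ℝ)..θ, Real.sin α / s α ^ 3) :
    ∀ θ,
      (deriv (deriv x) θ * deriv (deriv (deriv y)) θ -
            deriv (deriv (deriv x)) θ * deriv (deriv y) θ) /
          ((deriv x θ * deriv (deriv y) θ - deriv (deriv x) θ * deriv y θ) ^ ((5:ℝ) / 3)) -
        (1 / 2) *
          iteratedDeriv 2
            (fun θ' =>
              (deriv x θ' * deriv (deriv y) θ' - deriv (deriv x) θ' * deriv y θ') ^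
                (-(2:ℝ) / 3)) θ =
      s θ ^ 3 * (iteratedDeriv 2 s θ + s θ) := by
  have hd0 : Differentiable ℝ s := hsmooth.differentiable (by simp)
  have hc1 : ContDiff ℝ (⊤ : ℕ∞) (deriv s) := (contDiff_infty_iff_deriv.mp hsmooth).2
  have hd1 : Differentiable ℝ (deriv s) := hc1.differentiable (by simp)
  have hsne : ∀ t, s t ≠ 0 := fun t => (hpos t).ne'
  -- first derivatives via FTC
  have hcx : Continuous fun α => Real.cos α / s α ^ 3 :=
    Real.continuous_cos.div (hsmooth.continuous.pow 3) fun t => pow_ne_zero 3 (hsne t)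
  have hcy : Continuous fun α => Real.sin α / s α ^ 3 :=
    Real.continuous_sin.div (hsmooth.continuous.pow 3) fun t => pow_ne_zero 3 (hsne t)
  have hdx : deriv x = fun t => Real.cos t / s t ^ 3 := by
    funext t; rw [hx]; exact Continuous.deriv_integral _ hcx 0 t
  have hdy : deriv y = fun t => Real.sin t / s t ^ 3 := by
    funext t; rw [hy]; exact Continuous.deriv_integral _ hcy 0 t
  -- second derivatives
  have hX2 : ∀ t, HasDerivAt (fun u => Real.cos u / s u ^ 3)
      ((-(Real.sin t) * s t - 3 * Real.cos t * deriv s t) / s t ^ 4) t := by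
    intro t
    have h := (Real.hasDerivAt_cos t).div ((hd0 t).hasDerivAt.pow 3) (pow_ne_zero 3 (hsne t))
    refine h.congr_deriv ?_
    have := hsne t
    simp only [Pi.pow_apply]
    field_simp
    ring
  have hY2 : ∀ t, HasDerivAt (fun u => Real.sin u / s u ^ 3)
      ((Real.cos t * s t - 3 * Real.sin t * deriv s t) / s t ^ 4) t := by
    intro t
    have h := (Real.hasDerivAt_sin t).div ((hd0 t).hasDerivAt.pow 3) (pow_ne_zero 3 (hsne t))
    refine h.congr_deriv ?_
    have := hsne t
    simp only [Pi.pow_apply]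
    field_simp
    ring
  have hdx2 : deriv (fun t => Real.cos t / s t ^ 3) =
      fun t => (-(Real.sin t) * s t - 3 * Real.cos t * deriv s t) / s t ^ 4 := by
    funext t; exact (hX2 t).deriv
  have hdy2 : deriv (fun t => Real.sin t / s t ^ 3) =
      fun t => (Real.cos t * s t - 3 * Real.sin t * deriv s t) / s t ^ 4 := by
    funext t; exact (hY2 t).deriv
  -- third derivatives
  have hX3 : ∀ t, HasDerivAt (fun u => (-(Real.sin u) * s u - 3 * Real.cos u * deriv s u) / s u ^ 4)
      ((-(Real.cos t) * s t ^ 2 + 6 * Real.sin t * s t * deriv s t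
        - 3 * Real.cos t * s t * deriv (deriv s) t + 12 * Real.cos t * deriv s t ^ 2) / s t ^ 5) t := by
    intro t
    have hnum : HasDerivAt (fun u => -(Real.sin u) * s u - 3 * Real.cos u * deriv s u)
        (-(Real.cos t) * s t + -(Real.sin t) * deriv s t -
          (3 * -(Real.sin t) * deriv s t + 3 * Real.cos t * deriv (deriv s) t)) t := by
      have h1 := (Real.hasDerivAt_sin t).neg.mul (hd0 t).hasDerivAt
      have h2 := ((Real.hasDerivAt_cos t).const_mul (3:ℝ)).mul (hd1 t).hasDerivAt
      convert h1.sub h2 using 1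
      all_goals rfl
    have h := hnum.div ((hd0 t).hasDerivAt.pow 4) (pow_ne_zero 4 (hsne t))
    refine h.congr_deriv ?_
    have := hsne t
    simp only [Pi.pow_apply]
    field_simp
    ring
  have hY3 : ∀ t, HasDerivAt (fun u => (Real.cos u * s u - 3 * Real.sin u * deriv s u) / s u ^ 4)
      ((-(Real.sin t) * s t ^ 2 - 6 * Real.cos t * s t * deriv s t
        - 3 * Real.sin t * s t * deriv (deriv s) t + 12 * Real.sin t * deriv s t ^ 2) / s t ^ 5) t := by
    intro t
    have hnum : HasDerivAt (fun u => Real.cos u * s u - 3 * Real.sin u * deriv s u)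
        (-(Real.sin t) * s t + Real.cos t * deriv s t -
          (3 * Real.cos t * deriv s t + 3 * Real.sin t * deriv (deriv s) t)) t := by
      have h1 := (Real.hasDerivAt_cos t).mul (hd0 t).hasDerivAt
      have h2 := ((Real.hasDerivAt_sin t).const_mul (3:ℝ)).mul (hd1 t).hasDerivAt
      convert h1.sub h2 using 1
      all_goals rfl
    have h := hnum.div ((hd0 t).hasDerivAt.pow 4) (pow_ne_zero 4 (hsne t))
    refine h.congr_deriv ?_
    have := hsne t
    simp only [Pi.pow_apply]
    field_simp
    ring
  have hdx3 : deriv (fun t => (-(Real.sin t) * s t - 3 * Real.cos t * deriv s t) / s t ^ 4) =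
      fun t => (-(Real.cos t) * s t ^ 2 + 6 * Real.sin t * s t * deriv s t
        - 3 * Real.cos t * s t * deriv (deriv s) t + 12 * Real.cos t * deriv s t ^ 2) / s t ^ 5 := by
    funext t; exact (hX3 t).deriv
  have hdy3 : deriv (fun t => (Real.cos t * s t - 3 * Real.sin t * deriv s t) / s t ^ 4) =
      fun t => (-(Real.sin t) * s t ^ 2 - 6 * Real.cos t * s t * deriv s t
        - 3 * Real.sin t * s t * deriv (deriv s) t + 12 * Real.sin t * deriv s t ^ 2) / s t ^ 5 := by
    funext t; exact (hY3 t).deriv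
  -- the Wronskian
  have hW : ∀ t, Real.cos t / s t ^ 3 *
        ((Real.cos t * s t - 3 * Real.sin t * deriv s t) / s t ^ 4) -
      (-(Real.sin t) * s t - 3 * Real.cos t * deriv s t) / s t ^ 4 * (Real.sin t / s t ^ 3) =
      (s t ^ 6)⁻¹ := fun t =>
    dual_key1 (s t) (deriv s t) (Real.cos t) (Real.sin t) (hpos t) (sin_sq_add_cos_sq t)
  intro θ
  simp only [hdx, hdy, hdx2, hdy2, hdx3, hdy3]
  have hfun : (fun t => (Real.cos t / s t ^ 3 *
        ((Real.cos t * s t - 3 * Real.sin t * deriv s t) / s t ^ 4) -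
      (-(Real.sin t) * s t - 3 * Real.cos t * deriv s t) / s t ^ 4 * (Real.sin t / s t ^ 3)) ^
        (-(2:ℝ) / 3)) = fun t => s t ^ 4 := by
    funext t
    rw [hW t, dual_rpow4 (s t) (hpos t)]
  rw [hW θ, dual_rpow5 (s θ) (hpos θ), hfun]
  -- compute the iterated derivatives
  have hp1 : deriv (fun t => s t ^ 4) = fun t => 4 * s t ^ 3 * deriv s t := by
    funext t
    have := ((hd0 t).hasDerivAt.pow 4).deriv
    rw [show (fun t => s t ^ 4) = s ^ 4 from rfl, this]; push_cast; ring
  have hit : iteratedDeriv 2 (fun t => s t ^ 4) θ =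
      12 * s θ ^ 2 * deriv s θ ^ 2 + 4 * s θ ^ 3 * deriv (deriv s) θ := by
    rw [iteratedDeriv_succ, iteratedDeriv_one, hp1]
    have h2 := ((((hd0 θ).hasDerivAt.pow 3).const_mul (4:ℝ)).mul (hd1 θ).hasDerivAt).deriv
    rw [show (fun t => 4 * s t ^ 3 * deriv s t) = (fun y => 4 * (s ^ 3) y) * deriv s from rfl, h2]
    simp only [Pi.pow_apply]; push_cast; ring
  have hits : iteratedDeriv 2 s θ = deriv (deriv s) θ := by
    rw [iteratedDeriv_succ, iteratedDeriv_one]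
  rw [hit, hits]
  -- final algebraic identity
  have hpy := sin_sq_add_cos_sq θ
  have hne := hsne θ
  field_simp
  linear_combination (2 * s θ ^ 3 + 6 * s θ ^ 2 * deriv (deriv s) θ +
    12 * s θ * deriv s θ ^ 2) * hpy

end
end

section
/- Let Ψ: ℝ → ℝ be a smooth, positive, π-periodic function, and suppose the even L₋₂ Minkowski problem with data Ψ is solvable: there exists a smooth, positive, π-periodic function s: ℝ → ℝ with s''(θ) + s(θ) > 0 for all θ and s(θ)·(s''(θ)+s(θ))^(1/3) = Ψ(θ) for all θ. Then Ψ has at least eight critical points in one period: there exist eight distinct points θ₁, …, θ₈ ∈ [0, 2π) with Ψ'(θᵢ) = 0 for i = 1, …, 8. -/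
open Real Set Filter

noncomputable section

private lemma sin_pos' {x θ : ℝ} (h1 : x < θ) (h2 : θ < x + π) : 0 < Real.sin (θ - x) :=
  Real.sin_pos_of_pos_of_lt_pi (by linarith) (by linarith)

private lemma sin_neg' {x θ : ℝ} (h1 : x - π < θ) (h2 : θ < x) : Real.sin (θ - x) < 0 := by
  have h : 0 < Real.sin (x - θ) := Real.sin_pos_of_pos_of_lt_pi (by linarith) (by linarith)
  rw [show θ - x = -(x - θ) by ring, Real.sin_neg]
  linarith

private lemma periodic_deriv' {f : ℝ → ℝ} (h : Function.Periodic f π) :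
    Function.Periodic (deriv f) π := by
  intro x
  have h1 : (fun y => f (y + π)) = f := funext h
  calc deriv f (x + π) = deriv (fun y => f (y + π)) x := (deriv_comp_add_const f π x).symm
    _ = deriv f x := by rw [h1]

private lemma key_contra {q : ℝ → ℝ} (hc : Continuous q) {a b x y : ℝ}
    (hax : a ≤ x) (hxy : x < y) (hyb : y ≤ b)
    (hnn : ∀ θ ∈ Icc a b, 0 ≤ q θ) (hpos : ∀ θ ∈ Ioo x y, 0 < q θ)
    (hzero : (∫ θ in a..b, q θ) = 0) : False := by
  have h1 : 0 ≤ ∫ θ in a..x, q θ :=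
    intervalIntegral.integral_nonneg hax
      (fun u hu => hnn u ⟨hu.1, le_trans hu.2 (le_trans hxy.le hyb)⟩)
  have h2 : 0 < ∫ θ in x..y, q θ :=
    intervalIntegral.intervalIntegral_pos_of_pos_on
      (Continuous.intervalIntegrable (μ := MeasureTheory.volume) hc x y) hpos hxy
  have h3 : 0 ≤ ∫ θ in y..b, q θ :=
    intervalIntegral.integral_nonneg hyb
      (fun u hu => hnn u ⟨le_trans (le_trans hax hxy.le) hu.1, hu.2⟩)
  have e1 : (∫ θ in a..x, q θ) + ∫ θ in x..y, q θ = ∫ θ in a..y, q θ :=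
    intervalIntegral.integral_add_adjacent_intervals
      (hc.intervalIntegrable a x) (hc.intervalIntegrable x y)
  have e2 : (∫ θ in a..y, q θ) + ∫ θ in y..b, q θ = ∫ θ in a..b, q θ :=
    intervalIntegral.integral_add_adjacent_intervals
      ((hc.intervalIntegrable a x).trans (hc.intervalIntegrable x y)) (hc.intervalIntegrable y b)
  rw [← e1] at e2
  rw [hzero] at e2
  linarith

private lemma sign_const {F : ℝ → ℝ} (hF : Continuous F) {x y : ℝ} (hxy : x < y)
    (hne : ∀ θ ∈ Ioo x y, F θ ≠ 0) :
    (∀ θ ∈ Ioo x y, 0 < F θ) ∨ (∀ θ ∈ Ioo x y, F θ < 0) := by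
  have hm : (x + y) / 2 ∈ Ioo x y := ⟨by linarith, by linarith⟩
  set m := (x + y) / 2 with hmdef
  have hsub : ∀ θ ∈ Ioo x y, uIcc θ m ⊆ Ioo x y := by
    intro θ hθ z hz
    rw [Set.mem_uIcc] at hz
    rcases hz with ⟨h1, h2⟩ | ⟨h1, h2⟩ <;>
      exact ⟨by rcases hθ with ⟨a1,a2⟩; rcases hm with ⟨b1,b2⟩; linarith,
        by rcases hθ with ⟨a1,a2⟩; rcases hm with ⟨b1,b2⟩; linarith⟩
  have main : ∀ θ ∈ Ioo x y, F m < 0 → F θ < 0 := by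
    intro θ hθ h
    by_contra hc'
    push_neg at hc'
    have h0 : (0:ℝ) ∈ uIcc (F θ) (F m) := by
      rw [Set.mem_uIcc]; right; exact ⟨h.le, hc'⟩
    obtain ⟨z, hz, hz0⟩ := intermediate_value_uIcc (hF.continuousOn) h0
    exact hne z (hsub θ hθ hz) hz0
  have main' : ∀ θ ∈ Ioo x y, 0 < F m → 0 < F θ := by
    intro θ hθ h
    by_contra hc'
    push_neg at hc'
    have h0 : (0:ℝ) ∈ uIcc (F θ) (F m) := by
      rw [Set.mem_uIcc]; left; exact ⟨hc', h.le⟩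
    obtain ⟨z, hz, hz0⟩ := intermediate_value_uIcc (hF.continuousOn) h0
    exact hne z (hsub θ hθ hz) hz0
  rcases lt_or_gt_of_ne (hne m hm) with h | h
  · exact Or.inr (fun θ hθ => main θ hθ h)
  · exact Or.inl (fun θ hθ => main' θ hθ h)

private lemma neg_hint {F : ℝ → ℝ}
    (hint : ∀ a α β : ℝ, (∫ θ in a..(a + π), F θ * (Real.sin (θ - α) * Real.sin (θ - β))) = 0)
    (a α β : ℝ) :
    (∫ θ in a..(a + π), -(F θ * (Real.sin (θ - α) * Real.sin (θ - β)))) = 0 := by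
  rw [intervalIntegral.integral_neg, hint a α β, neg_zero]

private lemma no_zero_in_pos (F : ℝ → ℝ) (hF : Continuous F)
    (hint : ∀ a α β : ℝ, (∫ θ in a..(a + π), F θ * (Real.sin (θ - α) * Real.sin (θ - β))) = 0)
    (x : ℝ) (hpos : ∀ θ ∈ Ioo x (x + π), 0 < F θ) : False := by
  have hxp : x < x + π := by linarith [Real.pi_pos]
  refine key_contra (q := fun θ => F θ * (Real.sin (θ - x) * Real.sin (θ - x)))
    (by fun_prop) (le_refl x) hxp (le_refl (x + π)) ?_ ?_ (hint x x x)
  · intro θ hθ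
    rcases eq_or_lt_of_le hθ.1 with h | h
    · rw [← h]; simp
    rcases eq_or_lt_of_le hθ.2 with h' | h'
    · have e : θ - x = π := by rw [h']; ring
      simp [e]
    · have s1 := sin_pos' h h'
      have := hpos θ ⟨h, h'⟩
      exact le_of_lt (mul_pos this (mul_pos s1 s1))
  · intro θ hθ
    have s1 := sin_pos' hθ.1 hθ.2
    exact mul_pos (hpos θ hθ) (mul_pos s1 s1)

private lemma zero_in (F : ℝ → ℝ) (hF : Continuous F)
    (hint : ∀ a α β : ℝ, (∫ θ in a..(a + π), F θ * (Real.sin (θ - α) * Real.sin (θ - β))) = 0)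
    (x : ℝ) : ∃ z ∈ Ioo x (x + π), F z = 0 := by
  by_contra hno
  push_neg at hno
  have hxp : x < x + π := by linarith [Real.pi_pos]
  rcases sign_const hF hxp hno with hp | hn
  · exact no_zero_in_pos F hF hint x hp
  · refine no_zero_in_pos (fun θ => -F θ) hF.neg ?_ x ?_
    · intro a α β
      have h := neg_hint hint a α β
      simpa [neg_mul] using h
    · intro θ hθ
      simpa using hn θ hθ

private lemma third_pos (F : ℝ → ℝ) (hF : Continuous F)
    (hint : ∀ a α β : ℝ, (∫ θ in a..(a + π), F θ * (Real.sin (θ - α) * Real.sin (θ - β))) = 0)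
    {a b : ℝ} (hab : a < b) (hba : b < a + π)
    (hFa : F a = 0) (hFb : F b = 0) (hFπ : F (a + π) = 0)
    (h1 : ∀ θ ∈ Ioo a b, 0 < F θ)
    (h2 : (∀ θ ∈ Ioo b (a + π), 0 < F θ) ∨ (∀ θ ∈ Ioo b (a + π), F θ < 0)) : False := by
  have hsplit : ∀ θ ∈ Icc a (a + π),
      θ = a ∨ θ ∈ Ioo a b ∨ θ = b ∨ θ ∈ Ioo b (a + π) ∨ θ = a + π := by
    intro θ hθ
    rcases eq_or_lt_of_le hθ.1 with h | h
    · exact Or.inl h.symm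
    rcases lt_trichotomy θ b with h' | h' | h'
    · exact Or.inr (Or.inl ⟨h, h'⟩)
    · exact Or.inr (Or.inr (Or.inl h'))
    rcases eq_or_lt_of_le hθ.2 with h'' | h''
    · exact Or.inr (Or.inr (Or.inr (Or.inr h'')))
    · exact Or.inr (Or.inr (Or.inr (Or.inl ⟨h', h''⟩)))
  rcases h2 with h2 | h2
  · refine key_contra (q := fun θ => F θ * (Real.sin (θ - a) * Real.sin (θ - a)))
      (by fun_prop) (le_refl a) hab (by linarith) ?_ ?_ (hint a a a)
    · intro θ hθ
      rcases hsplit θ hθ with h | h | h | h | h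
      · rw [h]; simp [hFa]
      · have sa := sin_pos' h.1 (by linarith [h.2])
        exact le_of_lt (mul_pos (h1 θ h) (mul_pos sa sa))
      · rw [h]; simp [hFb]
      · have sa := sin_pos' (by linarith [h.1]) h.2
        exact le_of_lt (mul_pos (h2 θ h) (mul_pos sa sa))
      · rw [h]; simp [hFπ]
    · intro θ hθ
      have sa := sin_pos' hθ.1 (by linarith [hθ.2])
      exact mul_pos (h1 θ hθ) (mul_pos sa sa)
  · refine key_contra (q := fun θ => -(F θ * (Real.sin (θ - a) * Real.sin (θ - b))))
      (by fun_prop) (le_refl a) hab (by linarith) ?_ ?_ (neg_hint hint a a b)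
    · intro θ hθ
      rcases hsplit θ hθ with h | h | h | h | h
      · rw [h]; simp [hFa]
      · have sa := sin_pos' h.1 (by linarith [h.2])
        have sb := sin_neg' (by linarith [h.1]) h.2
        have := mul_neg_of_pos_of_neg (h1 θ h) (mul_neg_of_pos_of_neg sa sb)
        linarith
      · rw [h]; simp [hFb]
      · have sa := sin_pos' (by linarith [h.1]) h.2
        have sb := sin_pos' h.1 (by linarith [h.2])
        have := mul_neg_of_neg_of_pos (h2 θ h) (mul_pos sa sb)
        linarith
      · rw [h]; simp [hFπ]
    · intro θ hθ
      have sa := sin_pos' hθ.1 (by linarith [hθ.2])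
      have sb := sin_neg' (by linarith [hθ.1]) hθ.2
      have := mul_neg_of_pos_of_neg (h1 θ hθ) (mul_neg_of_pos_of_neg sa sb)
      linarith

private lemma third_zero (F : ℝ → ℝ) (hF : Continuous F) (hper : Function.Periodic F π)
    (hint : ∀ a α β : ℝ, (∫ θ in a..(a + π), F θ * (Real.sin (θ - α) * Real.sin (θ - β))) = 0)
    {a b : ℝ} (hab : a < b) (hba : b < a + π) (hFa : F a = 0) (hFb : F b = 0) :
    ∃ c, F c = 0 ∧ (c ∈ Ioo a b ∨ c ∈ Ioo b (a + π)) := by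
  by_contra hno
  push_neg at hno
  have hne1 : ∀ θ ∈ Ioo a b, F θ ≠ 0 := fun θ h hz => (hno θ hz).1 h
  have hne2 : ∀ θ ∈ Ioo b (a + π), F θ ≠ 0 := fun θ h hz => (hno θ hz).2 h
  have hFπ : F (a + π) = 0 := (hper a).trans hFa
  rcases sign_const hF hab hne1 with hp | hn
  · exact third_pos F hF hint hab hba hFa hFb hFπ hp
      (sign_const hF (by linarith) hne2)
  · have hint' : ∀ a α β : ℝ,
        (∫ θ in a..(a + π), (fun t => -F t) θ * (Real.sin (θ - α) * Real.sin (θ - β))) = 0 := by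
      intro a α β
      simpa [neg_mul] using neg_hint hint a α β
    have hne2' : ∀ θ ∈ Ioo b (a + π), -F θ ≠ 0 := fun θ h hz => hne2 θ h (by simpa using hz)
    refine third_pos (fun t => -F t) hF.neg hint' hab hba (by simp [hFa]) (by simp [hFb])
      (by simp [hFπ]) (fun θ h => by simpa using hn θ h) ?_
    exact sign_const hF.neg (by linarith) hne2'

private lemma fourth_pos (F : ℝ → ℝ) (hF : Continuous F)
    (hint : ∀ a α β : ℝ, (∫ θ in a..(a + π), F θ * (Real.sin (θ - α) * Real.sin (θ - β))) = 0)
    {a p r : ℝ} (hap : a < p) (hpr : p < r) (hra : r < a + π)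
    (hFa : F a = 0) (hFp : F p = 0) (hFr : F r = 0) (hFπ : F (a + π) = 0)
    (h1 : ∀ θ ∈ Ioo a p, 0 < F θ)
    (h2 : (∀ θ ∈ Ioo p r, 0 < F θ) ∨ (∀ θ ∈ Ioo p r, F θ < 0))
    (h3 : (∀ θ ∈ Ioo r (a + π), 0 < F θ) ∨ (∀ θ ∈ Ioo r (a + π), F θ < 0)) : False := by
  have hsplit : ∀ θ ∈ Icc a (a + π),
      θ = a ∨ θ ∈ Ioo a p ∨ θ = p ∨ θ ∈ Ioo p r ∨ θ = r ∨ θ ∈ Ioo r (a + π) ∨ θ = a + π := by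
    intro θ hθ
    rcases eq_or_lt_of_le hθ.1 with h | h
    · exact Or.inl h.symm
    rcases lt_trichotomy θ p with h' | h' | h'
    · exact Or.inr (Or.inl ⟨h, h'⟩)
    · exact Or.inr (Or.inr (Or.inl h'))
    rcases lt_trichotomy θ r with h'' | h'' | h''
    · exact Or.inr (Or.inr (Or.inr (Or.inl ⟨h', h''⟩)))
    · exact Or.inr (Or.inr (Or.inr (Or.inr (Or.inl h''))))
    rcases eq_or_lt_of_le hθ.2 with h''' | h'''
    · exact Or.inr (Or.inr (Or.inr (Or.inr (Or.inr (Or.inr h''')))))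
    · exact Or.inr (Or.inr (Or.inr (Or.inr (Or.inr (Or.inl ⟨h'', h'''⟩)))))
  rcases h2 with h2 | h2 <;> rcases h3 with h3 | h3
  · -- (+,+) : q = F * sin(θ-a)^2
    refine key_contra (q := fun θ => F θ * (Real.sin (θ - a) * Real.sin (θ - a)))
      (by fun_prop) (le_refl a) hap (by linarith) ?_ ?_ (hint a a a)
    · intro θ hθ
      rcases hsplit θ hθ with h | h | h | h | h | h | h
      · rw [h]; simp [hFa]
      · have sa := sin_pos' h.1 (by linarith [h.2])
        exact le_of_lt (mul_pos (h1 θ h) (mul_pos sa sa))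
      · rw [h]; simp [hFp]
      · have sa := sin_pos' (show a < θ by linarith [h.1]) (by linarith [h.2])
        exact le_of_lt (mul_pos (h2 θ h) (mul_pos sa sa))
      · rw [h]; simp [hFr]
      · have sa := sin_pos' (show a < θ by linarith [h.1]) h.2
        exact le_of_lt (mul_pos (h3 θ h) (mul_pos sa sa))
      · rw [h]; simp [hFπ]
    · intro θ hθ
      have sa := sin_pos' hθ.1 (by linarith [hθ.2])
      exact mul_pos (h1 θ hθ) (mul_pos sa sa)
  · -- (+,−) : q = -(F * (sin(θ-r) * sin(θ-a)))
    refine key_contra (q := fun θ => -(F θ * (Real.sin (θ - r) * Real.sin (θ - a))))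
      (by fun_prop) (le_refl a) hap (by linarith) ?_ ?_ (neg_hint hint a r a)
    · intro θ hθ
      rcases hsplit θ hθ with h | h | h | h | h | h | h
      · rw [h]; simp [hFa]
      · have sa := sin_pos' h.1 (by linarith [h.2])
        have sr := sin_neg' (show r - π < θ by linarith [h.1]) (by linarith [h.2])
        have := mul_neg_of_pos_of_neg (h1 θ h) (mul_neg_of_neg_of_pos sr sa)
        linarith
      · rw [h]; simp [hFp]
      · have sa := sin_pos' (show a < θ by linarith [h.1]) (by linarith [h.2])
        have sr := sin_neg' (show r - π < θ by linarith [h.1]) h.2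
        have := mul_neg_of_pos_of_neg (h2 θ h) (mul_neg_of_neg_of_pos sr sa)
        linarith
      · rw [h]; simp [hFr]
      · have sa := sin_pos' (show a < θ by linarith [h.1]) h.2
        have sr := sin_pos' h.1 (by linarith [h.2])
        have := mul_neg_of_neg_of_pos (h3 θ h) (mul_pos sr sa)
        linarith
      · rw [h]; simp [hFπ]
    · intro θ hθ
      have sa := sin_pos' hθ.1 (by linarith [hθ.2])
      have sr := sin_neg' (show r - π < θ by linarith [hθ.1]) (by linarith [hθ.2])
      have := mul_neg_of_pos_of_neg (h1 θ hθ) (mul_neg_of_neg_of_pos sr sa)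
      linarith
  · -- (−,+) : q = F * (sin(θ-p) * sin(θ-r))
    refine key_contra (q := fun θ => F θ * (Real.sin (θ - p) * Real.sin (θ - r)))
      (by fun_prop) (le_refl a) hap (by linarith) ?_ ?_ (hint a p r)
    · intro θ hθ
      rcases hsplit θ hθ with h | h | h | h | h | h | h
      · rw [h]; simp [hFa]
      · have sp := sin_neg' (show p - π < θ by linarith [h.1]) h.2
        have sr := sin_neg' (show r - π < θ by linarith [h.1]) (by linarith [h.2])
        exact le_of_lt (mul_pos (h1 θ h) (mul_pos_of_neg_of_neg sp sr))
      · rw [h]; simp [hFp]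
      · have sp := sin_pos' h.1 (by linarith [h.2])
        have sr := sin_neg' (show r - π < θ by linarith [h.1]) h.2
        exact le_of_lt (mul_pos_of_neg_of_neg (h2 θ h) (mul_neg_of_pos_of_neg sp sr))
      · rw [h]; simp [hFr]
      · have sp := sin_pos' (show p < θ by linarith [h.1]) (by linarith [h.2])
        have sr := sin_pos' h.1 (by linarith [h.2])
        exact le_of_lt (mul_pos (h3 θ h) (mul_pos sp sr))
      · rw [h]; simp [hFπ]
    · intro θ hθ
      have sp := sin_neg' (show p - π < θ by linarith [hθ.1]) hθ.2
      have sr := sin_neg' (show r - π < θ by linarith [hθ.1]) (by linarith [hθ.2])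
      exact mul_pos (h1 θ hθ) (mul_pos_of_neg_of_neg sp sr)
  · -- (−,−) : q = -(F * (sin(θ-a) * sin(θ-p)))
    refine key_contra (q := fun θ => -(F θ * (Real.sin (θ - a) * Real.sin (θ - p))))
      (by fun_prop) (le_refl a) hap (by linarith) ?_ ?_ (neg_hint hint a a p)
    · intro θ hθ
      rcases hsplit θ hθ with h | h | h | h | h | h | h
      · rw [h]; simp [hFa]
      · have sa := sin_pos' h.1 (by linarith [h.2])
        have sp := sin_neg' (show p - π < θ by linarith [h.1]) h.2
        have := mul_neg_of_pos_of_neg (h1 θ h) (mul_neg_of_pos_of_neg sa sp)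
        linarith
      · rw [h]; simp [hFp]
      · have sa := sin_pos' (show a < θ by linarith [h.1]) (by linarith [h.2])
        have sp := sin_pos' h.1 (by linarith [h.2])
        have := mul_neg_of_neg_of_pos (h2 θ h) (mul_pos sa sp)
        linarith
      · rw [h]; simp [hFr]
      · have sa := sin_pos' (show a < θ by linarith [h.1]) h.2
        have sp := sin_pos' (show p < θ by linarith [h.1]) (by linarith [h.2])
        have := mul_neg_of_neg_of_pos (h3 θ h) (mul_pos sa sp)
        linarith
      · rw [h]; simp [hFπ]
    · intro θ hθ
      have sa := sin_pos' hθ.1 (by linarith [hθ.2])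
      have sp := sin_neg' (show p - π < θ by linarith [hθ.1]) hθ.2
      have := mul_neg_of_pos_of_neg (h1 θ hθ) (mul_neg_of_pos_of_neg sa sp)
      linarith

private lemma fourth_zero (F : ℝ → ℝ) (hF : Continuous F) (hper : Function.Periodic F π)
    (hint : ∀ a α β : ℝ, (∫ θ in a..(a + π), F θ * (Real.sin (θ - α) * Real.sin (θ - β))) = 0)
    {a p r : ℝ} (hap : a < p) (hpr : p < r) (hra : r < a + π)
    (hFa : F a = 0) (hFp : F p = 0) (hFr : F r = 0) :
    ∃ z, F z = 0 ∧ (z ∈ Ioo a p ∨ z ∈ Ioo p r ∨ z ∈ Ioo r (a + π)) := by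
  by_contra hno
  push_neg at hno
  have hne1 : ∀ θ ∈ Ioo a p, F θ ≠ 0 := fun θ h hz => (hno θ hz).1 h
  have hne2 : ∀ θ ∈ Ioo p r, F θ ≠ 0 := fun θ h hz => (hno θ hz).2.1 h
  have hne3 : ∀ θ ∈ Ioo r (a + π), F θ ≠ 0 := fun θ h hz => (hno θ hz).2.2 h
  have hFπ : F (a + π) = 0 := (hper a).trans hFa
  rcases sign_const hF hap hne1 with hp1 | hn1
  · exact fourth_pos F hF hint hap hpr hra hFa hFp hFr hFπ hp1
      (sign_const hF hpr hne2) (sign_const hF (by linarith) hne3)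
  · have hint' : ∀ a α β : ℝ,
        (∫ θ in a..(a + π), (fun t => -F t) θ * (Real.sin (θ - α) * Real.sin (θ - β))) = 0 := by
      intro a α β
      simpa [neg_mul] using neg_hint hint a α β
    refine fourth_pos (fun t => -F t) hF.neg hint' hap hpr hra (by simp [hFa]) (by simp [hFp])
      (by simp [hFr]) (by simp [hFπ]) (fun θ h => by simpa using hn1 θ h) ?_ ?_
    · exact sign_const hF.neg hpr (fun θ h hz => hne2 θ h (by simpa using hz))
    · exact sign_const hF.neg (by linarith) (fun θ h hz => hne3 θ h (by simpa using hz))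

private lemma four_zeros_s18 (F : ℝ → ℝ) (hF : Continuous F) (hper : Function.Periodic F π)
    (hint : ∀ a α β : ℝ, (∫ θ in a..(a + π), F θ * (Real.sin (θ - α) * Real.sin (θ - β))) = 0) :
    ∃ z₀ z₁ z₂ z₃ : ℝ, 0 < z₀ ∧ z₀ < π ∧ z₀ < z₁ ∧ z₁ < z₂ ∧ z₂ < z₃ ∧ z₃ < z₀ + π ∧
      F z₀ = 0 ∧ F z₁ = 0 ∧ F z₂ = 0 ∧ F z₃ = 0 := by
  obtain ⟨a, ha, hFa⟩ := zero_in F hF hint 0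
  have ha0 : 0 < a := ha.1
  have haπ : a < π := by have := ha.2; linarith
  obtain ⟨b, hb, hFb⟩ := zero_in F hF hint a
  obtain ⟨c, hFc, hc⟩ := third_zero F hF hper hint hb.1 hb.2 hFa hFb
  -- order p < q among {b, c}
  obtain ⟨p, q, hpq, hqa, hFp, hFq⟩ :
      ∃ p q, (a < p ∧ p < q) ∧ q < a + π ∧ F p = 0 ∧ F q = 0 := by
    rcases hc with h | h
    · exact ⟨c, b, ⟨h.1, h.2⟩, hb.2, hFc, hFb⟩
    · exact ⟨b, c, ⟨hb.1, h.1⟩, h.2, hFb, hFc⟩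
  obtain ⟨z, hFz, hz⟩ := fourth_zero F hF hper hint hpq.1 hpq.2 hqa hFa hFp hFq
  rcases hz with h | h | h
  · exact ⟨a, z, p, q, ha0, haπ, h.1, h.2, hpq.2, hqa, hFa, hFz, hFp, hFq⟩
  · exact ⟨a, p, z, q, ha0, haπ, hpq.1, h.1, h.2, hqa, hFa, hFp, hFz, hFq⟩
  · exact ⟨a, p, q, z, ha0, haπ, hpq.1, hpq.2, h.1, h.2, hFa, hFp, hFq, hFz⟩

private lemma trig_id (α β θ : ℝ) :
    Real.sin (θ - α) * Real.sin (θ - β) =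
      Real.cos (α - β) / 2 + (-Real.cos (α + β) / 2) * Real.cos (2 * θ)
        + (-Real.sin (α + β) / 2) * Real.sin (2 * θ) := by
  have h := Real.sin_sq_add_cos_sq θ
  simp only [Real.sin_sub, Real.cos_sub, Real.cos_add, Real.sin_add, Real.sin_two_mul,
    Real.cos_two_mul]
  linear_combination (Real.cos α * Real.cos β) * h

private lemma build8 {Ψ : ℝ → ℝ} (hper : Function.Periodic (deriv Ψ) π)
    (w : Fin 4 → ℝ) (hmem : ∀ k, w k ∈ Ico (0:ℝ) π) (hinj : Function.Injective w)
    (hz : ∀ k, deriv Ψ (w k) = 0) :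
    ∃ c : Fin 8 → ℝ, Function.Injective c ∧
      (∀ i, c i ∈ Ico (0:ℝ) (2 * π)) ∧ ∀ i, deriv Ψ (c i) = 0 := by
  refine ⟨fun i => w ⟨i.val % 4, Nat.mod_lt _ (by norm_num)⟩ +
      (if i.val < 4 then 0 else π), ?_, ?_, ?_⟩
  · intro i j hij
    by_cases hi : i.val < 4 <;> by_cases hj : j.val < 4 <;> simp only [hi, hj, if_pos, if_neg,
      if_true, if_false, add_zero, not_lt] at hij
    · have := hinj hij
      have h2 : i.val % 4 = j.val % 4 := congrArg Fin.val this
      have : i.val = j.val := by omega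
      exact Fin.ext this
    · have m1 := (hmem ⟨i.val % 4, Nat.mod_lt _ (by norm_num)⟩).2
      have m2 := (hmem ⟨j.val % 4, Nat.mod_lt _ (by norm_num)⟩).1
      linarith
    · have m1 := (hmem ⟨i.val % 4, Nat.mod_lt _ (by norm_num)⟩).1
      have m2 := (hmem ⟨j.val % 4, Nat.mod_lt _ (by norm_num)⟩).2
      linarith
    · have h1 : w ⟨i.val % 4, Nat.mod_lt _ (by norm_num)⟩
          = w ⟨j.val % 4, Nat.mod_lt _ (by norm_num)⟩ := by linarith
      have := hinj h1
      have h2 : i.val % 4 = j.val % 4 := congrArg Fin.val this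
      have hi8 := i.isLt
      have hj8 := j.isLt
      have : i.val = j.val := by omega
      exact Fin.ext this
  · intro i
    dsimp only
    have m := hmem ⟨i.val % 4, Nat.mod_lt _ (by norm_num)⟩
    have hπ := Real.pi_pos
    constructor
    · rcases le_or_gt (4:ℕ) i.val with h | h
      · rw [if_neg (by omega)]; linarith [m.1]
      · rw [if_pos h]; linarith [m.1]
    · rcases le_or_gt (4:ℕ) i.val with h | h
      · rw [if_neg (by omega)]; linarith [m.2]
      · rw [if_pos h]; linarith [m.2]
  · intro i
    dsimp only
    rcases le_or_gt (4:ℕ) i.val with h | h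
    · rw [if_neg (by omega)]
      rw [hper]
      exact hz _
    · rw [if_pos h, add_zero]
      exact hz _

private lemma master_identity {s u1 u2 u3 : ℝ → ℝ}
    (Hs : ∀ θ, HasDerivAt s (u1 θ) θ) (H1 : ∀ θ, HasDerivAt u1 (u2 θ) θ)
    (H2 : ∀ θ, HasDerivAt u2 (u3 θ) θ)
    (hc0 : Continuous s) (hc1 : Continuous u1) (hc2 : Continuous u2) (hc3 : Continuous u3)
    (hp0 : Function.Periodic s π) (hp1 : Function.Periodic u1 π) (hp2 : Function.Periodic u2 π)
    (a α β : ℝ) :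
    (∫ θ in a..(a + π), (3 * u1 θ * u2 θ + s θ * u3 θ + 4 * s θ * u1 θ) *
      (Real.sin (θ - α) * Real.sin (θ - β))) = 0 := by
  have HP : ∀ θ : ℝ, HasDerivAt (fun t =>
      Real.cos (α - β) / 2 * ((u1 t ^ 2 + s t * u2 t) + 2 * s t ^ 2)
      + ((-Real.cos (α + β) / 2) * ((u1 t ^ 2 + s t * u2 t) * Real.cos (2 * t)
            + 2 * (s t * u1 t) * Real.sin (2 * t))
        + (-Real.sin (α + β) / 2) * ((u1 t ^ 2 + s t * u2 t) * Real.sin (2 * t)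
            - 2 * (s t * u1 t) * Real.cos (2 * t))))
      ((3 * u1 θ * u2 θ + s θ * u3 θ + 4 * s θ * u1 θ) *
        (Real.sin (θ - α) * Real.sin (θ - β))) θ := by
    intro θ
    rw [trig_id α β θ]
    have h2x : HasDerivAt (fun t : ℝ => 2 * t) 2 θ := by
      simpa using (hasDerivAt_id θ).const_mul (2:ℝ)
    have Hc : HasDerivAt (fun t => Real.cos (2 * t)) (-Real.sin (2 * θ) * 2) θ :=
      (Real.hasDerivAt_cos (2 * θ)).comp θ h2x
    have Hsn : HasDerivAt (fun t => Real.sin (2 * t)) (Real.cos (2 * θ) * 2) θ :=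
      (Real.hasDerivAt_sin (2 * θ)).comp θ h2x
    have A : HasDerivAt (fun t => u1 t ^ 2 + s t * u2 t)
        ((2:ℕ) * u1 θ ^ (2 - 1) * u2 θ + (u1 θ * u2 θ + s θ * u3 θ)) θ :=
      ((H1 θ).pow 2).add ((Hs θ).mul (H2 θ))
    have SB : HasDerivAt (fun t => 2 * (s t * u1 t))
        (2 * (u1 θ * u1 θ + s θ * u2 θ)) θ :=
      ((Hs θ).mul (H1 θ)).const_mul (2:ℝ)
    have B := A.add (((Hs θ).pow 2).const_mul (2:ℝ))
    have C1 := (A.mul Hc).add (SB.mul Hsn)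
    have C2 := (A.mul Hsn).sub (SB.mul Hc)
    have big := (B.const_mul (Real.cos (α - β) / 2)).add
      ((C1.const_mul (-Real.cos (α + β) / 2)).add (C2.const_mul (-Real.sin (α + β) / 2)))
    refine big.congr_deriv ?_
    push_cast
    ring
  have hcont : Continuous (fun θ => (3 * u1 θ * u2 θ + s θ * u3 θ + 4 * s θ * u1 θ) *
      (Real.sin (θ - α) * Real.sin (θ - β))) := by fun_prop
  rw [intervalIntegral.integral_eq_sub_of_hasDerivAt (fun θ _ => HP θ)
    (hcont.intervalIntegrable a (a + π))]
  have e1 : Real.cos (2 * (a + π)) = Real.cos (2 * a) := by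
    rw [show 2 * (a + π) = 2 * a + 2 * π by ring, Real.cos_add_two_pi]
  have e2 : Real.sin (2 * (a + π)) = Real.sin (2 * a) := by
    rw [show 2 * (a + π) = 2 * a + 2 * π by ring, Real.sin_add_two_pi]
  rw [hp0 a, hp1 a, hp2 a, e1, e2]
  ring

private lemma inj4 {w0 w1 w2 w3 : ℝ} (n01 : w0 ≠ w1) (n02 : w0 ≠ w2) (n03 : w0 ≠ w3)
    (n12 : w1 ≠ w2) (n13 : w1 ≠ w3) (n23 : w2 ≠ w3) :
    Function.Injective ![w0, w1, w2, w3] := by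
  intro i j hij
  fin_cases i <;> fin_cases j <;> simp_all

/-- If the even `L₋₂` Minkowski problem with smooth, positive,
`π`-periodic data `Ψ` is solvable, i.e. there is a smooth, positive, `π`-periodic
support function `s` with `s'' + s > 0` and `s (s'' + s)^(1/3) = Ψ`, then `Ψ` has at
least eight distinct critical points in `[0, 2π)`. -/
theorem eight_critical_points_necessary
    (Ψ : ℝ → ℝ) (hΨsmooth : ContDiff ℝ (⊤ : ℕ∞) Ψ) (hΨpos : ∀ θ, 0 < Ψ θ)
    (hΨper : Function.Periodic Ψ π)
    (s : ℝ → ℝ) (hsmooth : ContDiff ℝ (⊤ : ℕ∞) s) (hpos : ∀ θ, 0 < s θ)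
    (hper : Function.Periodic s π) (hconv : ∀ θ, 0 < rad s θ)
    (hsol : ∀ θ, s θ * rad s θ ^ ((1:ℝ) / 3) = Ψ θ) :
    ∃ c : Fin 8 → ℝ, Function.Injective c ∧
      (∀ i, c i ∈ Ico (0:ℝ) (2 * π)) ∧ ∀ i, deriv Ψ (c i) = 0 := by
  have hg1 := contDiff_infty_iff_deriv.mp hsmooth
  have hg2 := contDiff_infty_iff_deriv.mp hg1.2
  have hg3 := contDiff_infty_iff_deriv.mp hg2.2
  set u1 := deriv s with hu1
  set u2 := deriv u1 with hu2
  set u3 := deriv u2 with hu3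
  have hd0 : Differentiable ℝ s := hg1.1
  have hd1 : Differentiable ℝ u1 := hg2.1
  have hd2 : Differentiable ℝ u2 := hg3.1
  have hc0 : Continuous s := hsmooth.continuous
  have hc1 : Continuous u1 := hg1.2.continuous
  have hc2 : Continuous u2 := hg2.2.continuous
  have hc3 : Continuous u3 := hg3.2.continuous
  have Hs : ∀ θ, HasDerivAt s (u1 θ) θ := fun θ => (hd0 θ).hasDerivAt
  have H1 : ∀ θ, HasDerivAt u1 (u2 θ) θ := fun θ => (hd1 θ).hasDerivAt
  have H2 : ∀ θ, HasDerivAt u2 (u3 θ) θ := fun θ => (hd2 θ).hasDerivAt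
  have hp1 : Function.Periodic u1 π := periodic_deriv' hper
  have hp2 : Function.Periodic u2 π := periodic_deriv' hp1
  have hp3 : Function.Periodic u3 π := periodic_deriv' hp2
  set g : ℝ → ℝ := fun θ => 3 * u1 θ * u2 θ + s θ * u3 θ + 4 * s θ * u1 θ with hgdef
  have hgc : Continuous g := by fun_prop
  have hgper : Function.Periodic g π := by
    intro x
    simp only [hgdef]
    rw [hper x, hp1 x, hp2 x, hp3 x]
  have hrad : ∀ θ, rad s θ = u2 θ + s θ := by
    intro θ
    simp only [rad]
    rw [iteratedDeriv_succ, iteratedDeriv_one, hu2, hu1]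
  have hcube : ∀ θ, Ψ θ ^ 3 = s θ ^ 3 * (u2 θ + s θ) := by
    intro θ
    rw [← hsol θ, mul_pow, ← hrad θ]
    congr 1
    rw [← Real.rpow_natCast (rad s θ ^ ((1:ℝ) / 3)) 3, ← Real.rpow_mul (hconv θ).le]
    norm_num
  have hint : ∀ a α β : ℝ,
      (∫ θ in a..(a + π), g θ * (Real.sin (θ - α) * Real.sin (θ - β))) = 0 := by
    intro a α β
    simp only [hgdef]
    exact master_identity Hs H1 H2 hc0 hc1 hc2 hc3 hper hp1 hp2 a α β
  have hziff : ∀ z, g z = 0 → deriv Ψ z = 0 := by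
    intro z hz
    have hdΨ : Differentiable ℝ Ψ := (contDiff_infty_iff_deriv.mp hΨsmooth).1
    have hΨd : HasDerivAt (fun t => Ψ t ^ 3) (3 * Ψ z ^ 2 * deriv Ψ z) z := by
      have h := (hdΨ z).hasDerivAt.pow 3
      exact h.congr_deriv (by norm_num)
    have hΨd2 : HasDerivAt (fun t => Ψ t ^ 3) (s z ^ 2 * g z) z := by
      have hfun : (fun t => Ψ t ^ 3) = fun t => s t ^ 3 * (u2 t + s t) := funext hcube
      rw [hfun]
      have big := ((Hs z).pow 3).mul ((H2 z).add (Hs z))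
      refine big.congr_deriv ?_
      simp only [hgdef, Pi.add_apply, Pi.pow_apply]
      push_cast
      ring
    have e := hΨd.unique hΨd2
    rw [hz, mul_zero] at e
    have h3 : (3:ℝ) * Ψ z ^ 2 ≠ 0 := by
      have := hΨpos z
      positivity
    exact (mul_eq_zero.mp e).resolve_left h3
  obtain ⟨z0, z1, z2, z3, h00, h0π, h01, h12, h23, h3π, f0, f1, f2, f3⟩ :=
    four_zeros_s18 g hgc hgper hint
  have hΨdper : Function.Periodic (deriv Ψ) π := periodic_deriv' hΨper
  have hπ := Real.pi_pos
  set red : ℝ → ℝ := fun z => if z < π then z else z - π with hreddef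
  have hmem : ∀ z : ℝ, 0 < z → z < 2 * π → red z ∈ Ico 0 π := by
    intro z h1 h2
    simp only [hreddef]
    split_ifs with h
    · exact ⟨h1.le, h⟩
    · push_neg at h
      exact ⟨by linarith, by linarith⟩
  have hzero : ∀ z : ℝ, deriv Ψ z = 0 → deriv Ψ (red z) = 0 := by
    intro z hz
    simp only [hreddef]
    split_ifs with h
    · exact hz
    · rw [hΨdper.sub_eq]
      exact hz
  have hrinj : ∀ x y : ℝ, x < y → y < x + π → red x ≠ red y := by
    intro x y h1 h2
    simp only [hreddef]
    split_ifs <;> intro he <;> linarith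
  have n01 := hrinj z0 z1 h01 (by linarith)
  have n02 := hrinj z0 z2 (by linarith) (by linarith)
  have n03 := hrinj z0 z3 (by linarith) h3π
  have n12 := hrinj z1 z2 h12 (by linarith)
  have n13 := hrinj z1 z3 (by linarith) (by linarith)
  have n23 := hrinj z2 z3 h23 (by linarith)
  have b0 : red z0 ∈ Ico 0 π := hmem z0 h00 (by linarith)
  have b1 : red z1 ∈ Ico 0 π := hmem z1 (by linarith) (by linarith)
  have b2 : red z2 ∈ Ico 0 π := hmem z2 (by linarith) (by linarith)
  have b3 : red z3 ∈ Ico 0 π := hmem z3 (by linarith) (by linarith)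
  refine build8 hΨdper ![red z0, red z1, red z2, red z3] ?_ ?_ ?_
  · intro k
    fin_cases k <;> first | exact b0 | exact b1 | exact b2 | exact b3
  · exact inj4 n01 n02 n03 n12 n13 n23
  · intro k
    fin_cases k
    · exact hzero z0 (hziff z0 f0)
    · exact hzero z1 (hziff z1 f1)
    · exact hzero z2 (hziff z2 f2)
    · exact hzero z3 (hziff z3 f3)

end
end
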